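/- There exists a mapping w assigning to every pair (f, p), where f : [0,1] → ℂ is continuous with f(0) = f(1) (a loop) and p ∈ ℂ \ f([0,1]), an integer w(f, p), such that: (1) if f is constant then w(f, p) = 0, and if R is a rectangle with vertices a, b, c, d listed counter-clockwise from the lower-left corner, φ_R : [0,1] → ∂R is the piecewise-linear path with φ_R(t) = a_i + (a_{i+1} − a_i)(4t − i) for i/4 ≤ t ≤ (i+1)/4 (i = 0,1,2,3, with (a₀,a₁,a₂,a₃,a₄) = (a,b,c,d,a)), and p lies in the interior of R, then w(φ_R, p) = 1; (2) if p and q lie in the same connected component of ℂ \ f([0,1]) then w(f, p) = w(f, q); (3) if h : [0,1] × [0,1] → ℂ \ {p} is continuous with h(0, u) = h(1, u) for all u, then w(h(·,0), p) = w(h(·,1), p); (4) if s ∈ [0,1] and g(t) = f(s + t mod 1) for all t ∈ [0,1], then w(g, p) = w(f, p); (5) if f, g are loops with f(1) = g(0) and h is their concatenation (h(t) = f(2t) for t ∈ [0,1/2], h(t) = g(2t−1) for t ∈ [1/2,1]) and p ∉ h([0,1]), then w(h, p) = w(f, p) + w(g, p). -/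

import Mathlib

open Set

/-- The piecewise-linear counter-clockwise circuit traversing the boundary of the
rectangle `{z : α ≤ Re z ≤ β, γ ≤ Im z ≤ δ}`, starting at the lower-left corner:
`φ_R(t) = a_i + (a_{i+1} − a_i)(4t − i)` for `i/4 ≤ t ≤ (i+1)/4`, where
`(a₀, a₁, a₂, a₃, a₄) = (a, b, c, d, a)` are the vertices listed counter-clockwise. -/
noncomputable def rectCircuit (α β γ δ : ℝ) : ℝ → ℂ := fun t =>
  let a : ℂ := (α : ℂ) + (γ : ℂ) * Complex.I
  let b : ℂ := (β : ℂ) + (γ : ℂ) * Complex.I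
  let c : ℂ := (β : ℂ) + (δ : ℂ) * Complex.I
  let d : ℂ := (α : ℂ) + (δ : ℂ) * Complex.I
  if t ≤ 1 / 4 then a + (b - a) * ((4 * t - 0 : ℝ) : ℂ)
  else if t ≤ 1 / 2 then b + (c - b) * ((4 * t - 1 : ℝ) : ℂ)
  else if t ≤ 3 / 4 then c + (d - c) * ((4 * t - 2 : ℝ) : ℂ)
  else d + (a - d) * ((4 * t - 3 : ℝ) : ℂ)

section WindingAux

open Complex Metric


/-- `L` is a continuous logarithm-lift of `g` on `[0,1]`, with total winding `k`. -/
def LoopLiftsTo (g L : ℝ → ℂ) (k : ℤ) : Prop :=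
  ContinuousOn L (Icc 0 1) ∧ (∀ t ∈ Icc (0:ℝ) 1, Complex.exp (L t) = g t) ∧
    L 1 - L 0 = (k : ℂ) * (2 * Real.pi * Complex.I)

open Classical in
/-- The winding number of a loop `g : ℝ → ℂ` around `0`. -/
noncomputable def windAux (g : ℝ → ℂ) : ℤ :=
  if h : ∃ Lk : (ℝ → ℂ) × ℤ, LoopLiftsTo g Lk.1 Lk.2 then h.choose.2 else 0

lemma liftsTo_unique {g L L' : ℝ → ℂ} {k k' : ℤ}
    (h : LoopLiftsTo g L k) (h' : LoopLiftsTo g L' k') : k = k' := by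
  obtain ⟨hL, he, hk⟩ := h
  obtain ⟨hL', he', hk'⟩ := h'
  have h01 : (0:ℝ) ∈ Icc (0:ℝ) 1 := ⟨le_refl _, zero_le_one⟩
  have h11 : (1:ℝ) ∈ Icc (0:ℝ) 1 := ⟨zero_le_one, le_refl _⟩
  -- the difference of the lifts takes values in 2πℤ·i
  have key : ∀ t ∈ Icc (0:ℝ) 1, ∃ n : ℤ, (L t - L' t).im = n * (2 * Real.pi) := by
    intro t ht
    have : Complex.exp (L t - L' t) = 1 := by
      rw [Complex.exp_sub, he t ht, he' t ht, div_self]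
      rw [← he t ht]; exact Complex.exp_ne_zero _
    obtain ⟨n, hn⟩ := Complex.exp_eq_one_iff.mp this
    exact ⟨n, by rw [hn]; simp [Complex.mul_im]⟩
  -- imaginary part of the difference is continuous on a connected set
  set φ : ℝ → ℝ := fun t => (L t - L' t).im with hφ
  have hφc : ContinuousOn φ (Icc 0 1) :=
    Complex.continuous_im.comp_continuousOn (hL.sub hL')
  have himg : IsPreconnected (φ '' Icc 0 1) := isPreconnected_Icc.image φ hφc
  have hsub : φ '' Icc 0 1 ⊆ {x : ℝ | ∃ n : ℤ, x = n * (2 * Real.pi)} := by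
    rintro x ⟨t, ht, rfl⟩
    obtain ⟨n, hn⟩ := key t ht
    exact ⟨n, hn⟩
  have h0m : φ 0 ∈ φ '' Icc 0 1 := mem_image_of_mem φ h01
  have h1m : φ 1 ∈ φ '' Icc 0 1 := mem_image_of_mem φ h11
  -- φ 0 = φ 1
  have heq : φ 0 = φ 1 := by
    by_contra hne
    have pi_pos := Real.pi_pos
    obtain ⟨n0, hn0⟩ := hsub h0m
    obtain ⟨n1, hn1⟩ := hsub h1m
    have habs : ∃ u v : ℝ, u ∈ φ '' Icc 0 1 ∧ v ∈ φ '' Icc 0 1 ∧ u + Real.pi ∈ Icc u v := by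
      rcases lt_or_gt_of_ne hne with hlt | hgt
      · refine ⟨φ 0, φ 1, h0m, h1m, le_add_of_nonneg_right pi_pos.le, ?_⟩
        have : n0 < n1 := by
          by_contra hc; push_neg at hc
          have : (n1:ℝ) * (2*Real.pi) ≤ n0 * (2*Real.pi) := by
            apply mul_le_mul_of_nonneg_right _ (by positivity)
            exact_mod_cast hc
          rw [← hn0, ← hn1] at this; linarith
        have : (n0:ℝ) + 1 ≤ n1 := by exact_mod_cast this
        rw [hn0, hn1]; nlinarith
      · refine ⟨φ 1, φ 0, h1m, h0m, le_add_of_nonneg_right pi_pos.le, ?_⟩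
        have : n1 < n0 := by
          by_contra hc; push_neg at hc
          have : (n0:ℝ) * (2*Real.pi) ≤ n1 * (2*Real.pi) := by
            apply mul_le_mul_of_nonneg_right _ (by positivity)
            exact_mod_cast hc
          rw [← hn0, ← hn1] at this; linarith
        have : (n1:ℝ) + 1 ≤ n0 := by exact_mod_cast this
        rw [hn0, hn1]; nlinarith
    obtain ⟨u, v, hu, hv, hmem⟩ := habs
    have : u + Real.pi ∈ φ '' Icc 0 1 := himg.Icc_subset hu hv hmem
    obtain ⟨m, hm⟩ := hsub this
    obtain ⟨nu, hnu⟩ := hsub hu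
    have : ((2*(m - nu) : ℤ) : ℝ) = 1 := by
      push_cast; rw [hnu] at hm; nlinarith
    have : (2*(m - nu) : ℤ) = 1 := by exact_mod_cast this
    omega
  -- conclude
  have haux : ∀ m : ℤ, ((m : ℂ) * (2 * Real.pi * Complex.I)).im = m * (2 * Real.pi) := by
    intro m; simp [Complex.mul_im]
  have him : ((k : ℂ) * (2 * Real.pi * Complex.I)).im
      = ((k' : ℂ) * (2 * Real.pi * Complex.I)).im := by
    rw [← hk, ← hk']
    have h3 : L 1 - L 0 - (L' 1 - L' 0) = (L 1 - L' 1) - (L 0 - L' 0) := by ring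
    have : (L 1 - L 0 - (L' 1 - L' 0)).im = 0 := by
      rw [h3, Complex.sub_im]
      change φ 1 - φ 0 = 0
      rw [heq]; ring
    rw [Complex.sub_im] at this; linarith
  rw [haux k, haux k'] at him
  have pi_pos := Real.pi_pos
  have : (k : ℝ) = (k' : ℝ) := by nlinarith
  exact_mod_cast this

lemma windAux_eq {g L : ℝ → ℂ} {k : ℤ} (h : LoopLiftsTo g L k) : windAux g = k := by
  have hex : ∃ Lk : (ℝ → ℂ) × ℤ, LoopLiftsTo g Lk.1 Lk.2 := ⟨(L, k), h⟩
  rw [windAux]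
  rw [dif_pos hex]
  exact liftsTo_unique hex.choose_spec h

lemma grid_induction {P : ℝ → Prop} {δ : ℝ} (hδ : 0 < δ) (h0 : P 0)
    (step : ∀ s s' : ℝ, s ∈ Icc (0:ℝ) 1 → s' ∈ Icc (0:ℝ) 1 → s ≤ s' → s' - s ≤ δ → P s → P s') :
    P 1 := by
  obtain ⟨n, hn⟩ := exists_nat_ge (1/δ)
  have key : ∀ k : ℕ, P (min (k * δ) 1) := by
    intro k; induction k with
    | zero => simpa using h0
    | succ k ih =>
        have hk0 : (0:ℝ) ≤ k * δ := by positivity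
        have hmono : min ((k:ℝ) * δ) 1 ≤ min (((k:ℕ) + 1 : ℕ) * δ) 1 := by
          apply min_le_min _ le_rfl
          push_cast; nlinarith
        apply step (min ((k:ℝ) * δ) 1) _ _ _ hmono _ ih
        · exact ⟨le_min hk0 zero_le_one, min_le_right _ _⟩
        · constructor
          · apply le_min _ zero_le_one; positivity
          · exact min_le_right _ _
        · have h1 : min (((k:ℕ) + 1 : ℕ) * δ) 1 ≤ min ((k:ℝ) * δ + δ) (1 + δ) := by
            apply min_le_min _ (by linarith)
            push_cast; nlinarith
          have h2 : min ((k:ℝ) * δ + δ) (1 + δ) = min ((k:ℝ) * δ) 1 + δ := by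
            rw [← min_add_add_right]
          linarith [h1, h2.le]
  have hfin := key n
  have : min ((n:ℝ) * δ) 1 = 1 := by
    apply min_eq_right
    rw [div_le_iff₀ hδ] at hn; linarith
  rwa [this] at hfin

lemma exists_lift {g : ℝ → ℂ} (hg : ContinuousOn g (Icc 0 1))
    (h0 : ∀ t ∈ Icc (0:ℝ) 1, g t ≠ 0) :
    ∃ L : ℝ → ℂ, ContinuousOn L (Icc 0 1) ∧ ∀ t ∈ Icc (0:ℝ) 1, Complex.exp (L t) = g t := by
  -- positive lower bound for ‖g‖ on [0,1]
  obtain ⟨t₀, ht₀, hmin⟩ := isCompact_Icc.exists_isMinOn (⟨0, by norm_num⟩ : (Icc (0:ℝ) 1).Nonempty)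
    (continuous_norm.comp_continuousOn hg)
  set m : ℝ := ‖g t₀‖ with hm
  have hm0 : 0 < m := norm_pos_iff.mpr (h0 t₀ ht₀)
  have hmle : ∀ t ∈ Icc (0:ℝ) 1, m ≤ ‖g t‖ := fun t ht => hmin ht
  -- uniform continuity
  obtain ⟨δ, hδ0, hδ⟩ := Metric.uniformContinuousOn_iff.mp
    (isCompact_Icc.uniformContinuousOn_of_continuous hg) m hm0
  -- step lemma
  have step : ∀ s s' : ℝ, s ∈ Icc (0:ℝ) 1 → s' ∈ Icc (0:ℝ) 1 → s ≤ s' → s' - s ≤ δ/2 →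
      (∃ L : ℝ → ℂ, ContinuousOn L (Icc 0 s) ∧ ∀ t ∈ Icc (0:ℝ) s, Complex.exp (L t) = g t) →
      (∃ L : ℝ → ℂ, ContinuousOn L (Icc 0 s') ∧ ∀ t ∈ Icc (0:ℝ) s', Complex.exp (L t) = g t) := by
    rintro s s' hs hs' hss hd ⟨L, hL, hLe⟩
    refine ⟨fun t => L (min t s) + Complex.log (g t / g (min t s)), ?_, ?_⟩
    · -- continuity
      have hmapsto : MapsTo (fun t => min t s) (Icc 0 s') (Icc 0 s) := by
        intro t ht; exact ⟨le_min ht.1 hs.1, min_le_right _ _⟩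
      have hsub1 : Icc (0:ℝ) s' ⊆ Icc 0 1 := Icc_subset_Icc le_rfl hs'.2
      have hsub2 : Icc (0:ℝ) s ⊆ Icc 0 1 := Icc_subset_Icc le_rfl hs.2
      have hminc : ContinuousOn (fun t : ℝ => min t s) (Icc 0 s') :=
        (continuous_id.min continuous_const).continuousOn
      have hgmin : ContinuousOn (fun t => g (min t s)) (Icc 0 s') :=
        (hg.mono hsub2).comp hminc hmapsto
      have hratio : ∀ t ∈ Icc (0:ℝ) s', g t / g (min t s) ∈ Complex.slitPlane := by
        intro t ht
        have htm : min t s ∈ Icc (0:ℝ) 1 := hsub2 (hmapsto ht)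
        have ht1 : t ∈ Icc (0:ℝ) 1 := hsub1 ht
        have hne : g (min t s) ≠ 0 := h0 _ htm
        have hdist : dist t (min t s) < δ := by
          rw [Real.dist_eq, _root_.abs_of_nonneg (sub_nonneg.mpr (min_le_left t s))]
          rcases le_total t s with h | h
          · rw [min_eq_left h]; simpa using hδ0
          · rw [min_eq_right h]; have := ht.2; linarith
        have hgd : dist (g t) (g (min t s)) < m := hδ t ht1 _ htm hdist
        have hq : ‖g t / g (min t s) - 1‖ < 1 := by
          rw [div_sub_one hne, norm_div]
          rw [div_lt_one (norm_pos_iff.mpr hne)]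
          calc ‖g t - g (min t s)‖ = dist (g t) (g (min t s)) := by rw [dist_eq_norm]
            _ < m := hgd
            _ ≤ ‖g (min t s)‖ := hmle _ htm
        have := mem_slitPlane_of_norm_lt_one hq
        simpa using this
      apply ContinuousOn.add
      · exact hL.comp hminc hmapsto
      · exact (((hg.mono hsub1).div hgmin) (fun t ht => h0 _ (hsub2 (hmapsto ht)))).clog hratio
    · -- exp property
      intro t ht
      have htm : min t s ∈ Icc (0:ℝ) s := ⟨le_min ht.1 hs.1, min_le_right _ _⟩
      have htm1 : min t s ∈ Icc (0:ℝ) 1 := Icc_subset_Icc le_rfl hs.2 htm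
      have ht1 : t ∈ Icc (0:ℝ) 1 := Icc_subset_Icc le_rfl hs'.2 ht
      have hne : g (min t s) ≠ 0 := h0 _ htm1
      have hne2 : g t ≠ 0 := h0 _ ht1
      rw [Complex.exp_add, hLe _ htm, Complex.exp_log (div_ne_zero hne2 hne)]
      exact mul_div_cancel₀ _ hne
  -- base case and conclusion via grid induction
  have base : ∃ L : ℝ → ℂ, ContinuousOn L (Icc 0 (0:ℝ)) ∧
      ∀ t ∈ Icc (0:ℝ) (0:ℝ), Complex.exp (L t) = g t := by
    refine ⟨fun _ => Complex.log (g 0), continuousOn_const, ?_⟩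
    intro t ht
    have : t = 0 := le_antisymm ht.2 ht.1
    rw [this, Complex.exp_log (h0 0 (by norm_num))]
  exact grid_induction (by positivity : (0:ℝ) < δ/2) base step

lemma exists_loopLiftsTo {g : ℝ → ℂ} (hg : ContinuousOn g (Icc 0 1))
    (h0 : ∀ t ∈ Icc (0:ℝ) 1, g t ≠ 0) (hloop : g 0 = g 1) :
    ∃ (L : ℝ → ℂ) (k : ℤ), LoopLiftsTo g L k := by
  obtain ⟨L, hL, hLe⟩ := exists_lift hg h0
  have h01 : (0:ℝ) ∈ Icc (0:ℝ) 1 := by norm_num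
  have h11 : (1:ℝ) ∈ Icc (0:ℝ) 1 := by norm_num
  have : Complex.exp (L 1 - L 0) = 1 := by
    rw [Complex.exp_sub, hLe 1 h11, hLe 0 h01, ← hloop, div_self (h0 0 h01)]
  obtain ⟨n, hn⟩ := Complex.exp_eq_one_iff.mp this
  exact ⟨L, n, hL, hLe, hn⟩

/-- "Dog on a leash": loops that stay closer than `‖g₁‖` have equal winding numbers. -/
lemma windAux_leash {g₁ g₂ : ℝ → ℂ} (hg₁ : ContinuousOn g₁ (Icc 0 1))
    (hg₂ : ContinuousOn g₂ (Icc 0 1)) (l₁ : g₁ 0 = g₁ 1) (l₂ : g₂ 0 = g₂ 1)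
    (hlt : ∀ t ∈ Icc (0:ℝ) 1, dist (g₂ t) (g₁ t) < ‖g₁ t‖) : windAux g₂ = windAux g₁ := by
  have h₁0 : ∀ t ∈ Icc (0:ℝ) 1, g₁ t ≠ 0 := by
    intro t ht hz
    have h := hlt t ht
    rw [hz] at h
    simp only [norm_zero] at h
    exact absurd (dist_nonneg.trans_lt h) (lt_irrefl 0)
  have h₂0 : ∀ t ∈ Icc (0:ℝ) 1, g₂ t ≠ 0 := by
    intro t ht hz
    have h := hlt t ht
    rw [hz, dist_eq_norm, zero_sub, norm_neg] at h
    exact lt_irrefl _ h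
  obtain ⟨L, k, hL, hLe, hLk⟩ := exists_loopLiftsTo hg₁ h₁0 l₁
  have hratio : ∀ t ∈ Icc (0:ℝ) 1, g₂ t / g₁ t ∈ Complex.slitPlane := by
    intro t ht
    have hne := h₁0 t ht
    have hq : ‖g₂ t / g₁ t - 1‖ < 1 := by
      rw [div_sub_one hne, norm_div, div_lt_one (norm_pos_iff.mpr hne), ← dist_eq_norm]
      exact hlt t ht
    simpa using mem_slitPlane_of_norm_lt_one hq
  have hlift : LoopLiftsTo g₂ (fun t => L t + Complex.log (g₂ t / g₁ t)) k := by
    refine ⟨?_, ?_, ?_⟩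
    · exact hL.add ((hg₂.div hg₁ h₁0).clog hratio)
    · intro t ht
      rw [Complex.exp_add, hLe t ht,
        Complex.exp_log (div_ne_zero (h₂0 t ht) (h₁0 t ht))]
      rw [mul_div_assoc']
      exact mul_div_cancel_left₀ _ (h₁0 t ht)
    · show L 1 + Complex.log (g₂ 1 / g₁ 1) - (L 0 + Complex.log (g₂ 0 / g₁ 0)) = _
      have e1 : g₂ 1 / g₁ 1 = g₂ 0 / g₁ 0 := by rw [← l₁, ← l₂]
      rw [e1, ← hLk]; ring
  rw [windAux_eq hlift, windAux_eq ⟨hL, hLe, hLk⟩]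



lemma rect_apply1 {α β γ δ t : ℝ} (h : t ≤ 1/4) :
    rectCircuit α β γ δ t = ((α + (β - α)*(4*t) : ℝ) : ℂ) + (γ : ℝ) * Complex.I := by
  simp only [rectCircuit, if_pos h]
  push_cast; ring

lemma rect_apply2 {α β γ δ t : ℝ} (h1 : ¬ t ≤ 1/4) (h2 : t ≤ 1/2) :
    rectCircuit α β γ δ t = ((β : ℝ) : ℂ) + ((γ + (δ - γ)*(4*t - 1) : ℝ) : ℂ) * Complex.I := by
  simp only [rectCircuit, if_neg h1, if_pos h2]
  push_cast; ring

lemma rect_apply3 {α β γ δ t : ℝ} (h1 : ¬ t ≤ 1/2) (h2 : t ≤ 3/4) :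
    rectCircuit α β γ δ t = ((β + (α - β)*(4*t - 2) : ℝ) : ℂ) + ((δ:ℝ) : ℂ) * Complex.I := by
  have h1' : ¬ t ≤ 1/4 := fun h => h1 (h.trans (by norm_num))
  simp only [rectCircuit, if_neg h1', if_neg h1, if_pos h2]
  push_cast; ring

lemma rect_apply4 {α β γ δ t : ℝ} (h : ¬ t ≤ 3/4) :
    rectCircuit α β γ δ t = ((α : ℝ) : ℂ) + ((δ + (γ - δ)*(4*t - 3) : ℝ) : ℂ) * Complex.I := by
  have h1 : ¬ t ≤ 1/4 := fun hh => h (hh.trans (by norm_num))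
  have h2 : ¬ t ≤ 1/2 := fun hh => h (hh.trans (by norm_num))
  simp only [rectCircuit, if_neg h1, if_neg h2, if_neg h]
  push_cast; ring

lemma rect_continuous (α β γ δ : ℝ) : Continuous (rectCircuit α β γ δ) := by
  unfold rectCircuit
  simp only
  apply Continuous.if_le
  · fun_prop
  · apply Continuous.if_le
    · fun_prop
    · apply Continuous.if_le
      · fun_prop
      · fun_prop
      · exact continuous_id
      · exact continuous_const
      · intro t ht; rw [ht]; push_cast; ring
    · exact continuous_id
    · exact continuous_const
    · intro t ht
      rw [ht]
      rw [if_pos (by norm_num : (1:ℝ)/2 ≤ 3/4)]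
      push_cast; ring
  · exact continuous_id
  · exact continuous_const
  · intro t ht
    rw [ht]
    rw [if_pos (by norm_num : (1:ℝ)/4 ≤ 1/2)]
    push_cast; ring

lemma rect_zero (α β γ δ : ℝ) : rectCircuit α β γ δ 0 = (α : ℂ) + (γ : ℂ) * Complex.I := by
  rw [rect_apply1 (by norm_num)]; push_cast; ring

lemma rect_one (α β γ δ : ℝ) : rectCircuit α β γ δ 1 = (α : ℂ) + (γ : ℂ) * Complex.I := by
  rw [rect_apply4 (by norm_num)]; push_cast; ring

lemma rect_half (α β γ δ : ℝ) : rectCircuit α β γ δ (1/2) = (β : ℂ) + (δ : ℂ) * Complex.I := by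
  rw [rect_apply2 (by norm_num) (by norm_num)]; push_cast; ring

lemma rect_lift {α β γ δ : ℝ} {p : ℂ}
    (hre : p.re ∈ Ioo α β) (him : p.im ∈ Ioo γ δ) :
    ∃ L : ℝ → ℂ, ContinuousOn L (Icc 0 1) ∧
      (∀ t ∈ Icc (0:ℝ) 1, Complex.exp (L t) = rectCircuit α β γ δ t - p) ∧
      L 1 - L 0 = 2 * Real.pi * Complex.I := by
  set z : ℝ → ℂ := fun t => rectCircuit α β γ δ t - p with hzdef
  have hz : Continuous z := (rect_continuous α β γ δ).sub continuous_const
  -- imaginary/real part computations on the four sides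
  have him1 : ∀ s : ℝ, s ≤ 1/4 → (z s).im = γ - p.im := by
    intro s hs; rw [hzdef]; simp only [rect_apply1 hs]; simp
  have hre2 : ∀ s : ℝ, ¬ s ≤ 1/4 → s ≤ 1/2 → (z s).re = β - p.re := by
    intro s h1 h2; rw [hzdef]; simp only [rect_apply2 h1 h2]; simp
  have him3 : ∀ s : ℝ, ¬ s ≤ 1/2 → s ≤ 3/4 → (z s).im = δ - p.im := by
    intro s h1 h2; rw [hzdef]; simp only [rect_apply3 h1 h2]; simp
  have hre4 : ∀ s : ℝ, ¬ s ≤ 3/4 → (z s).re = α - p.re := by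
    intro s h1; rw [hzdef]; simp only [rect_apply4 h1]; simp
  have htop : (z (1/2)).im = δ - p.im := by
    rw [hzdef]; simp only [rect_half]; simp
  -- slit plane facts
  have hslit1 : ∀ s ∈ Icc (0:ℝ) (1/2), z s ∈ Complex.slitPlane := by
    intro s hs
    rw [Complex.mem_slitPlane_iff]
    rcases le_or_gt s (1/4) with h | h
    · right; rw [him1 s h]; have := him.1; intro hc; linarith
    · left; rw [hre2 s (not_le.mpr h) hs.2]; have := hre.2; linarith
  have hslit2 : ∀ s ∈ Icc (1/2:ℝ) 1, -(z s) ∈ Complex.slitPlane := by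
    intro s hs
    rw [Complex.mem_slitPlane_iff]
    rcases le_or_gt s (3/4) with h | h
    · right
      have : (z s).im = δ - p.im := by
        rcases eq_or_lt_of_le hs.1 with he | hlt
        · rw [← he]; exact htop
        · exact him3 s (not_le.mpr hlt) h
      rw [Complex.neg_im, this]; have := him.2; intro hc; linarith
    · left; rw [Complex.neg_re, hre4 s (not_le.mpr h)]; have := hre.1; linarith
  have hz0 : ∀ t ∈ Icc (0:ℝ) 1, z t ≠ 0 := by
    intro t ht
    rcases le_or_gt t (1/2) with h | h
    · exact Complex.slitPlane_ne_zero (hslit1 t ⟨ht.1, h⟩)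
    · have := Complex.slitPlane_ne_zero (hslit2 t ⟨h.le, ht.2⟩)
      intro hc; rw [hc] at this; simp at this
  -- the angle function
  set θ : ℝ → ℝ := fun t =>
    Complex.arg (z (min t (1/2))) +
      (Complex.arg (-(z (max t (1/2)))) + Real.pi - Complex.arg (z (1/2))) with hθdef
  have hbracket : Complex.arg (-(z (1/2))) + Real.pi - Complex.arg (z (1/2)) = 0 := by
    rw [Complex.arg_neg_eq_arg_sub_pi_of_im_pos (by rw [htop]; have := him.2; linarith)]
    ring
  have hθc : ContinuousOn θ (Icc 0 1) := by
    apply ContinuousOn.add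
    · intro t ht
      have hmem : min t (1/2) ∈ Icc (0:ℝ) (1/2) := ⟨le_min ht.1 (by norm_num), min_le_right _ _⟩
      have h1 : ContinuousAt (fun t : ℝ => z (min t (1/2))) t :=
        (hz.comp (continuous_id.min continuous_const)).continuousAt
      have h2 : ContinuousAt (fun t : ℝ => Complex.arg (z (min t (1/2)))) t :=
        ContinuousAt.comp (x := t) (Complex.continuousAt_arg (hslit1 (min t (1/2)) hmem)) h1
      exact h2.continuousWithinAt
    · apply ContinuousOn.sub _ continuousOn_const
      apply ContinuousOn.add _ continuousOn_const
      intro t ht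
      have hmem : max t (1/2) ∈ Icc (1/2:ℝ) 1 := ⟨le_max_right _ _, max_le ht.2 (by norm_num)⟩
      have h1 : ContinuousAt (fun t : ℝ => -(z (max t (1/2)))) t :=
        ((hz.comp (continuous_id.max continuous_const)).neg).continuousAt
      have h2 : ContinuousAt (fun t : ℝ => Complex.arg (-(z (max t (1/2))))) t :=
        ContinuousAt.comp (x := t) (Complex.continuousAt_arg (hslit2 (max t (1/2)) hmem)) h1
      exact h2.continuousWithinAt
  -- the lift
  refine ⟨fun t => (Real.log (‖z t‖) : ℂ) + (θ t : ℂ) * Complex.I, ?_, ?_, ?_⟩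
  · apply ContinuousOn.add
    · apply Complex.continuous_ofReal.comp_continuousOn
      intro t ht
      exact ((Real.continuousAt_log
        (by simpa using hz0 t ht)).comp
        (continuous_norm.comp hz).continuousAt).continuousWithinAt
    · exact (Complex.continuous_ofReal.comp_continuousOn hθc).mul continuousOn_const
  · intro t ht
    have habs : (0:ℝ) < ‖z t‖ := by
      exact norm_pos_iff.mpr (hz0 t ht)
    have hzt : rectCircuit α β γ δ t - p = z t := rfl
    rw [hzt, Complex.exp_add, ← Complex.ofReal_exp, Real.exp_log habs]
    rcases le_or_gt t (1/2) with h | h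
    · have hmin : min t (1/2) = t := min_eq_left h
      have hmax : max t (1/2) = 1/2 := max_eq_right h
      have : θ t = Complex.arg (z t) := by
        rw [hθdef]; simp only [hmin, hmax, hbracket, add_zero]
      rw [this, Complex.norm_mul_exp_arg_mul_I]
    · have hmin : min t (1/2) = 1/2 := min_eq_right h.le
      have hmax : max t (1/2) = t := max_eq_left h.le
      have hθt : θ t = Complex.arg (-(z t)) + Real.pi := by
        rw [hθdef]; simp only [hmin, hmax]; ring
      rw [hθt]
      have habsneg : ‖z t‖ = ‖-(z t)‖ := by simp
      push_cast
      rw [add_mul, Complex.exp_add, Complex.exp_pi_mul_I, habsneg]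
      have := Complex.norm_mul_exp_arg_mul_I (-(z t))
      calc (‖-(z t)‖ : ℂ) * (Complex.exp ((Complex.arg (-(z t)) : ℂ) * Complex.I) * (-1))
          = -((‖-(z t)‖ : ℂ) * Complex.exp ((Complex.arg (-(z t)) : ℂ) * Complex.I)) := by ring
        _ = -(-(z t)) := by rw [this]
        _ = z t := neg_neg _
  · have hz10 : z 1 = z 0 := by rw [hzdef]; simp only [rect_one, rect_zero]
    have hθ1 : θ 1 = Complex.arg (-(z 1)) + Real.pi := by
      rw [hθdef]; simp only [min_eq_right (by norm_num : (1/2:ℝ) ≤ 1),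
        max_eq_left (by norm_num : (1/2:ℝ) ≤ 1)]; ring
    have hθ0 : θ 0 = Complex.arg (z 0) := by
      rw [hθdef]; simp only [min_eq_left (by norm_num : (0:ℝ) ≤ 1/2),
        max_eq_right (by norm_num : (0:ℝ) ≤ 1/2), hbracket, add_zero]
    have hneg : Complex.arg (-(z 1)) = Complex.arg (z 1) + Real.pi := by
      apply Complex.arg_neg_eq_arg_add_pi_of_im_neg
      rw [hz10, him1 0 (by norm_num)]
      have := him.1; linarith
    have hθdiff : θ 1 - θ 0 = 2 * Real.pi := by
      rw [hθ1, hθ0, hneg, hz10]; ring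
    have habs10 : Real.log ‖z 1‖ = Real.log ‖z 0‖ := by rw [hz10]
    dsimp only
    rw [habs10]
    have : ((θ 1 : ℝ) : ℂ) * Complex.I - ((θ 0 : ℝ) : ℂ) * Complex.I
        = ((θ 1 - θ 0 : ℝ) : ℂ) * Complex.I := by push_cast; ring
    rw [add_sub_add_left_eq_sub, this, hθdiff]
    push_cast; ring


end WindingAux

open Complex Metric in
theorem exists_winding_number :
    ∃ w : (ℝ → ℂ) → ℂ → ℤ,
      -- (1) constant loops have winding number 0
      (∀ (c p : ℂ), p ≠ c → w (fun _ => c) p = 0) ∧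
      -- (1) the rectangular circuit winds once around interior points
      (∀ α β γ δ : ℝ, α < β → γ < δ → ∀ p : ℂ,
        p.re ∈ Ioo α β → p.im ∈ Ioo γ δ → w (rectCircuit α β γ δ) p = 1) ∧
      -- (2) constancy on components of the complement
      (∀ (f : ℝ → ℂ) (p q : ℂ), ContinuousOn f (Icc 0 1) → f 0 = f 1 →
        p ∉ f '' Icc 0 1 →
        q ∈ connectedComponentIn ((f '' Icc 0 1)ᶜ) p →
        w f p = w f q) ∧
      -- (3) homotopy invariance
      (∀ (h : ℝ → ℝ → ℂ) (p : ℂ),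
        ContinuousOn (fun x : ℝ × ℝ => h x.1 x.2) (Icc 0 1 ×ˢ Icc 0 1) →
        (∀ u ∈ Icc (0 : ℝ) 1, h 0 u = h 1 u) →
        (∀ t ∈ Icc (0 : ℝ) 1, ∀ u ∈ Icc (0 : ℝ) 1, h t u ≠ p) →
        w (fun t => h t 0) p = w (fun t => h t 1) p) ∧
      -- (4) invariance under change of the starting point
      (∀ (f : ℝ → ℂ) (p : ℂ) (s : ℝ), ContinuousOn f (Icc 0 1) → f 0 = f 1 →
        p ∉ f '' Icc 0 1 → s ∈ Icc (0 : ℝ) 1 →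
        w (fun t => if s + t ≤ 1 then f (s + t) else f (s + t - 1)) p = w f p) ∧
      -- (5) additivity under concatenation of loops
      (∀ (f g : ℝ → ℂ) (p : ℂ), ContinuousOn f (Icc 0 1) → ContinuousOn g (Icc 0 1) →
        f 0 = f 1 → g 0 = g 1 → f 1 = g 0 →
        p ∉ (fun t : ℝ => if t ≤ 1 / 2 then f (2 * t) else g (2 * t - 1)) '' Icc 0 1 →
        w (fun t : ℝ => if t ≤ 1 / 2 then f (2 * t) else g (2 * t - 1)) p
          = w f p + w g p) := by
  refine ⟨fun f p => windAux (fun t => f t - p), ?_, ?_, ?_, ?_, ?_, ?_⟩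
  · -- (1a) constant loops
    intro c p hp
    have hlift : LoopLiftsTo (fun _ => c - p) (fun _ => Complex.log (c - p)) 0 := by
      refine ⟨continuousOn_const, ?_, by simp⟩
      intro t _
      exact Complex.exp_log (sub_ne_zero.mpr (Ne.symm hp))
    exact windAux_eq hlift
  · -- (1b) rectangle circuit
    intro α β γ δ hab hgd p hre him
    obtain ⟨L, hL, hLe, hLk⟩ := rect_lift hre him
    refine windAux_eq ⟨hL, hLe, ?_⟩
    rw [hLk]; push_cast; ring
  · -- (2) constancy on components
    intro f p q hf hloop hp hq
    show windAux (fun t => f t - p) = windAux (fun t => f t - q)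
    set K := f '' Icc 0 1 with hK
    have hKc : IsCompact K := isCompact_Icc.image_of_continuousOn hf
    have hKne : K.Nonempty := ⟨f 0, mem_image_of_mem f (by norm_num)⟩
    have hU : IsOpen Kᶜ := hKc.isClosed.isOpen_compl
    have hconn : IsConnected (connectedComponentIn Kᶜ p) :=
      isConnected_connectedComponentIn_iff.mpr hp
    have hopen : IsOpen (connectedComponentIn Kᶜ p) := hU.connectedComponentIn
    have hpathc : IsPathConnected (connectedComponentIn Kᶜ p) :=
      (hopen.isConnected_iff_isPathConnected).mp hconn
    have hpmem : p ∈ connectedComponentIn Kᶜ p := mem_connectedComponentIn hp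
    have j : JoinedIn (connectedComponentIn Kᶜ p) p q := hpathc.joinedIn p hpmem q hq
    set γ : Path p q := j.somePath with hγ
    set e : ℝ → ℂ := (γ.extend : ℝ → ℂ) with he
    have hec : Continuous e := γ.continuous_extend
    have hemem : ∀ u ∈ Icc (0:ℝ) 1, e u ∉ K := by
      intro u hu
      have : e u ∈ connectedComponentIn Kᶜ p := by
        rw [he, γ.extend_apply hu]; exact j.somePath_mem _
      exact connectedComponentIn_subset _ _ this
    -- minimal distance from the path to the loop image
    obtain ⟨u₀, hu₀, hminOn⟩ := isCompact_Icc.exists_isMinOn (⟨0, by norm_num⟩ :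
      (Icc (0:ℝ) 1).Nonempty) (((continuous_infDist_pt K).comp hec).continuousOn)
    set m : ℝ := infDist (e u₀) K with hm
    have hm0 : 0 < m := (hKc.isClosed.notMem_iff_infDist_pos hKne).mp (hemem u₀ hu₀)
    have hkey : ∀ u ∈ Icc (0:ℝ) 1, ∀ t ∈ Icc (0:ℝ) 1, m ≤ ‖f t - e u‖ := by
      intro u hu t ht
      have h1 : m ≤ infDist (e u) K := hminOn hu
      have h2 : infDist (e u) K ≤ dist (e u) (f t) :=
        infDist_le_dist_of_mem (mem_image_of_mem f ht)
      rw [dist_comm, dist_eq_norm] at h2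
      linarith
    obtain ⟨δ', hδ'0, hδ'⟩ := Metric.uniformContinuousOn_iff.mp
      (isCompact_Icc.uniformContinuousOn_of_continuous hec.continuousOn) m hm0
    have hgrid : ∀ u ∈ Icc (0:ℝ) 1,
        windAux (fun t => f t - p) = windAux (fun t => f t - e u) →
        ∀ u' ∈ Icc (0:ℝ) 1, u ≤ u' → u' - u ≤ δ'/2 →
        windAux (fun t => f t - p) = windAux (fun t => f t - e u') := by
      intro u hu ih u' hu' hle hd
      have hdist : dist (e u') (e u) < m := by
        apply hδ' u' hu' u hu
        rw [Real.dist_eq, _root_.abs_of_nonneg (by linarith)]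
        linarith
      have hleash : windAux (fun t => f t - e u') = windAux (fun t => f t - e u) := by
        apply windAux_leash (g₁ := fun t => f t - e u) (g₂ := fun t => f t - e u') (hf.sub continuousOn_const) (hf.sub continuousOn_const)
          (by rw [hloop]) (by rw [hloop])
        intro t ht
        have : dist (f t - e u') (f t - e u) = dist (e u') (e u) := dist_sub_left _ _ _
        rw [this]
        exact hdist.trans_le (hkey u hu t ht)
      rw [ih, ← hleash]
    have hP1 : windAux (fun t => f t - p) = windAux (fun t => f t - e 1) := by
      apply grid_induction (P := fun u => windAux (fun t => f t - p)
        = windAux (fun t => f t - e u)) (by positivity : (0:ℝ) < δ'/2)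
      · have : e 0 = p := γ.extend_zero
        rw [this]
      · intro s s' hs hs' hss hd ih
        exact hgrid s hs ih s' hs' hss hd
    rw [hP1, show e 1 = q from γ.extend_one]
  · -- (3) homotopy invariance
    intro h p hF hloop hne
    show windAux (fun t => h t 0 - p) = windAux (fun t => h t 1 - p)
    set K : Set (ℝ × ℝ) := Icc (0:ℝ) 1 ×ˢ Icc (0:ℝ) 1 with hKdef
    have hKc : IsCompact K := isCompact_Icc.prod isCompact_Icc
    have hKne : K.Nonempty := ⟨(0, 0), by constructor <;> norm_num⟩
    obtain ⟨x₀, hx₀, hminOn⟩ := hKc.exists_isMinOn hKne ((hF.sub continuousOn_const).norm)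
    have hm0 : 0 < ‖h x₀.1 x₀.2 - p‖ :=
      norm_pos_iff.mpr (sub_ne_zero.mpr (hne x₀.1 hx₀.1 x₀.2 hx₀.2))
    set m : ℝ := ‖h x₀.1 x₀.2 - p‖ with hm
    have hkey : ∀ t ∈ Icc (0:ℝ) 1, ∀ u ∈ Icc (0:ℝ) 1, m ≤ ‖h t u - p‖ := by
      intro t ht u hu
      exact isMinOn_iff.mp hminOn ((t, u) : ℝ × ℝ) ⟨ht, hu⟩
    obtain ⟨δ', hδ'0, hδ'⟩ := Metric.uniformContinuousOn_iff.mp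
      (hKc.uniformContinuousOn_of_continuous hF) m hm0
    have hcont : ∀ u ∈ Icc (0:ℝ) 1, ContinuousOn (fun t => h t u) (Icc 0 1) := by
      intro u hu
      exact hF.comp ((continuous_id.prodMk continuous_const).continuousOn)
        (fun t ht => ⟨ht, hu⟩)
    have hP1 : windAux (fun t => h t 0 - p) = windAux (fun t => h t 1 - p) := by
      apply grid_induction (P := fun u => windAux (fun t => h t 0 - p)
        = windAux (fun t => h t u - p)) (by positivity : (0:ℝ) < δ'/2)
      · rfl
      · intro s s' hs hs' hss hd ih
        have hleash : windAux (fun t => h t s' - p) = windAux (fun t => h t s - p) := by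
          apply windAux_leash (g₁ := fun t => h t s - p) (g₂ := fun t => h t s' - p) ((hcont s hs).sub continuousOn_const)
            ((hcont s' hs').sub continuousOn_const)
            (by rw [hloop s hs]) (by rw [hloop s' hs'])
          intro t ht
          have h1 : dist (h t s' - p) (h t s - p) = dist (h t s') (h t s) :=
            dist_sub_right _ _ _
          rw [h1]
          have h2 : dist ((t, s') : ℝ × ℝ) ((t, s) : ℝ × ℝ) < δ' := by
            calc dist ((t, s') : ℝ × ℝ) ((t, s) : ℝ × ℝ)
                = max (dist t t) (dist s' s) := Prod.dist_eq
              _ = dist s' s := by rw [dist_self]; exact max_eq_right dist_nonneg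
              _ < δ' := by
                  rw [Real.dist_eq, _root_.abs_of_nonneg (by linarith)]; linarith
          have h3 : dist (h t s') (h t s) < m := hδ' (t, s') ⟨ht, hs'⟩ (t, s) ⟨ht, hs⟩ h2
          exact h3.trans_le (hkey t ht s hs)
        rw [ih, ← hleash]
    exact hP1
  · -- (4) change of starting point
    intro f p s hf hloop hp hs
    show windAux (fun t => (if s + t ≤ 1 then f (s + t) else f (s + t - 1)) - p)
      = windAux (fun t => f t - p)
    have h0 : ∀ t ∈ Icc (0:ℝ) 1, f t - p ≠ 0 := by
      intro t ht hc
      exact hp ⟨t, ht, sub_eq_zero.mp hc⟩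
    obtain ⟨L, k, hL, hLe, hLk⟩ := exists_loopLiftsTo (g := fun t => f t - p) (hf.sub continuousOn_const) h0
      (by rw [hloop])
    have hlift : LoopLiftsTo
        (fun t => (if s + t ≤ 1 then f (s + t) else f (s + t - 1)) - p)
        (fun t => L (min (s + t) 1) + (L (max (s + t) 1 - 1) - L 0)) k := by
      have hmaps1 : MapsTo (fun t : ℝ => min (s + t) 1) (Icc 0 1) (Icc 0 1) := by
        intro t ht
        exact ⟨le_min (by linarith [hs.1, ht.1]) zero_le_one, min_le_right _ _⟩
      have hmaps2 : MapsTo (fun t : ℝ => max (s + t) 1 - 1) (Icc 0 1) (Icc 0 1) := by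
        intro t ht
        dsimp only
        constructor
        · have := le_max_right (s + t) 1; linarith
        · have : max (s + t) 1 ≤ 2 := max_le (by linarith [hs.2, ht.2]) one_le_two
          linarith
      refine ⟨?_, ?_, ?_⟩
      · apply ContinuousOn.add
        · exact hL.comp ((continuous_const.add continuous_id).min continuous_const).continuousOn
            hmaps1
        · apply ContinuousOn.sub _ continuousOn_const
          exact hL.comp (((continuous_const.add continuous_id).max
            continuous_const).sub continuous_const).continuousOn hmaps2
      · intro t ht
        dsimp only
        rw [Complex.exp_add, Complex.exp_sub, hLe 0 (by norm_num),
          hLe _ (hmaps1 ht), hLe _ (hmaps2 ht)]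
        dsimp only
        rcases le_or_gt (s + t) 1 with hc | hc
        · rw [if_pos hc, min_eq_left hc, max_eq_right hc]
          have : (1:ℝ) - 1 = 0 := by ring
          rw [this, div_self (h0 0 (by norm_num)), mul_one]
        · rw [if_neg (not_le.mpr hc), min_eq_right hc.le, max_eq_left hc.le, hloop]
          exact mul_div_cancel₀ _ (by rw [← hloop]; exact h0 0 (by norm_num))
      · have e1 : min (s + 1) 1 = 1 := min_eq_right (by linarith [hs.1])
        have e2 : max (s + 1) 1 - 1 = s := by
          rw [max_eq_left (by linarith [hs.1])]; ring
        have e3 : min (s + 0) 1 = s := by rw [add_zero]; exact min_eq_left hs.2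
        have e4 : max (s + 0) 1 - 1 = 0 := by
          rw [add_zero, max_eq_right hs.2]; ring
        dsimp only
        rw [e1, e2, e3, e4]
        rw [show L 1 + (L s - L 0) - (L s + (L 0 - L 0)) = L 1 - L 0 by ring, hLk]
    rw [windAux_eq hlift, windAux_eq ⟨hL, hLe, hLk⟩]
  · -- (5) concatenation
    intro f g p hf hg hfl hgl hfg hp
    show windAux (fun t => (if t ≤ 1/2 then f (2*t) else g (2*t - 1)) - p)
      = windAux (fun t => f t - p) + windAux (fun t => g t - p)
    have hfim : ∀ u ∈ Icc (0:ℝ) 1, f u - p ≠ 0 := by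
      intro u hu hc
      apply hp
      refine ⟨u/2, ⟨by linarith [hu.1], by linarith [hu.2]⟩, ?_⟩
      dsimp only
      rw [if_pos (by linarith [hu.2] : u/2 ≤ 1/2)]
      rw [show 2 * (u/2) = u by ring]
      exact sub_eq_zero.mp hc
    have hgim : ∀ u ∈ Icc (0:ℝ) 1, g u - p ≠ 0 := by
      intro u hu hc
      rcases eq_or_lt_of_le hu.1 with he | hlt
      · rw [← he] at hc
        rw [← hfg] at hc
        exact hfim 1 (by norm_num) hc
      · apply hp
        refine ⟨(u+1)/2, ⟨by linarith [hu.1], by linarith [hu.2]⟩, ?_⟩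
        dsimp only
        rw [if_neg (by intro hcc; linarith : ¬ (u+1)/2 ≤ 1/2)]
        rw [show 2 * ((u+1)/2) - 1 = u by ring]
        exact sub_eq_zero.mp hc
    obtain ⟨F, k1, hF, hFe, hFk⟩ := exists_loopLiftsTo (g := fun t => f t - p) (hf.sub continuousOn_const) hfim
      (by rw [hfl])
    obtain ⟨G, k2, hG, hGe, hGk⟩ := exists_loopLiftsTo (g := fun t => g t - p) (hg.sub continuousOn_const) hgim
      (by rw [hgl])
    have hlift : LoopLiftsTo
        (fun t => (if t ≤ 1/2 then f (2*t) else g (2*t - 1)) - p)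
        (fun t => F (min (2*t) 1) + (G (max (2*t) 1 - 1) - G 0)) (k1 + k2) := by
      have hmaps1 : MapsTo (fun t : ℝ => min (2*t) 1) (Icc 0 1) (Icc 0 1) := by
        intro t ht
        exact ⟨le_min (by linarith [ht.1]) zero_le_one, min_le_right _ _⟩
      have hmaps2 : MapsTo (fun t : ℝ => max (2*t) 1 - 1) (Icc 0 1) (Icc 0 1) := by
        intro t ht
        dsimp only
        constructor
        · have := le_max_right (2*t) 1; linarith
        · have : max (2*t) 1 ≤ 2 := max_le (by linarith [ht.2]) one_le_two
          linarith
      refine ⟨?_, ?_, ?_⟩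
      · apply ContinuousOn.add
        · exact hF.comp ((continuous_const.mul continuous_id).min
            continuous_const).continuousOn hmaps1
        · apply ContinuousOn.sub _ continuousOn_const
          exact hG.comp (((continuous_const.mul continuous_id).max
            continuous_const).sub continuous_const).continuousOn hmaps2
      · intro t ht
        dsimp only
        rw [Complex.exp_add, Complex.exp_sub, hGe 0 (by norm_num),
          hFe _ (hmaps1 ht), hGe _ (hmaps2 ht)]
        dsimp only
        rcases le_or_gt t (1/2 : ℝ) with hc | hc
        · rw [if_pos hc, min_eq_left (by linarith), max_eq_right (by linarith)]
          have : (1:ℝ) - 1 = 0 := by ring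
          rw [this, div_self (hgim 0 (by norm_num)), mul_one]
        · rw [if_neg (not_le.mpr hc), min_eq_right (by linarith),
            max_eq_left (by linarith), hfg]
          exact mul_div_cancel₀ _ (hgim 0 (by norm_num))
      · have e1 : min (2*(1:ℝ)) 1 = 1 := min_eq_right (by norm_num)
        have e2 : max (2*(1:ℝ)) 1 - 1 = 1 := by rw [max_eq_left (by norm_num)]; norm_num
        have e3 : min (2*(0:ℝ)) 1 = 0 := by norm_num
        have e4 : max (2*(0:ℝ)) 1 - 1 = 0 := by norm_num
        dsimp only
        rw [e1, e2, e3, e4]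
        rw [show F 1 + (G 1 - G 0) - (F 0 + (G 0 - G 0))
          = (F 1 - F 0) + (G 1 - G 0) by ring, hFk, hGk]
        push_cast; ring
    rw [windAux_eq hlift, windAux_eq ⟨hF, hFe, hFk⟩, windAux_eq ⟨hG, hGe, hGk⟩]
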